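/- For every natural number n, the polynomial D_n(x) := ∑_{k=0}^n C(n,k)² x^k (x+1)^{n-k} equals ∑_{k=0}^n C(n,k) C(n+k,k) x^k. -/

import Mathlib

open Finset Polynomial

lemma key_nat (n m : ℕ) (hm : m ≤ n) :
    ∑ k ∈ range (m + 1), n.choose k ^ 2 * (n - k).choose (m - k) =
      n.choose m * (n + m).choose m := by
  have vdm : (n + m).choose m = ∑ k ∈ range (m + 1), n.choose k * m.choose k := by
    rw [Nat.add_choose_eq, Finset.Nat.sum_antidiagonal_eq_sum_range_succ_mk]
    refine Finset.sum_congr rfl fun k hk => ?_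
    simp only [Finset.mem_range, Nat.lt_succ_iff] at hk
    simp [Nat.choose_symm hk]
  rw [vdm, Finset.mul_sum]
  refine Finset.sum_congr rfl fun k hk => ?_
  simp only [Finset.mem_range, Nat.lt_succ_iff] at hk
  have h := Nat.choose_mul (n := n) (k := m) hk
  calc n.choose k ^ 2 * (n - k).choose (m - k)
      = n.choose k * (n.choose k * (n - k).choose (m - k)) := by ring
    _ = n.choose m * (n.choose k * m.choose k) := by rw [← h]; ring

theorem delannoy_poly_alt (n : ℕ) :
    (∑ k ∈ range (n + 1), (C ((n.choose k : ℚ))^2 * X ^ k * (X + 1) ^ (n - k))) =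
    ∑ k ∈ range (n + 1), C ((n.choose k : ℚ) * ((n + k).choose k : ℚ)) * X ^ k := by
  ext m
  rw [finset_sum_coeff, finset_sum_coeff]
  have hR : ∀ k ∈ range (n + 1),
      (C ((n.choose k : ℚ) * ((n + k).choose k : ℚ)) * X ^ k).coeff m =
        if m = k then (n.choose k : ℚ) * ((n + k).choose k : ℚ) else 0 := by
    intro k _
    rw [coeff_C_mul, coeff_X_pow]
    split <;> simp
  have hL : ∀ k ∈ range (n + 1),
      (C ((n.choose k : ℚ))^2 * X ^ k * (X + 1) ^ (n - k)).coeff m =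
        if k ≤ m then ((n.choose k : ℚ))^2 * ((n - k).choose (m - k) : ℚ) else 0 := by
    intro k _
    rw [mul_right_comm, ← C_pow, mul_assoc, coeff_C_mul,
      ← coeff_X_add_one_pow ℚ (n - k) (m - k), coeff_mul_X_pow']
    split <;> simp
  rw [Finset.sum_congr rfl hL, Finset.sum_congr rfl hR, Finset.sum_ite_eq (range (n + 1)) m]
  by_cases hm : m ≤ n
  · have hmem : m ∈ range (n + 1) := by simpa [Nat.lt_succ_iff] using hm
    rw [if_pos hmem]
    have hsub : (∑ k ∈ range (n + 1),
        if k ≤ m then ((n.choose k : ℚ))^2 * ((n - k).choose (m - k) : ℚ) else 0)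
        = ∑ k ∈ range (m + 1), ((n.choose k : ℚ))^2 * ((n - k).choose (m - k) : ℚ) := by
      calc (∑ k ∈ range (n + 1),
            if k ≤ m then ((n.choose k : ℚ))^2 * ((n - k).choose (m - k) : ℚ) else 0)
          = ∑ k ∈ range (n + 1), if k ∈ range (m + 1) then
              ((n.choose k : ℚ))^2 * ((n - k).choose (m - k) : ℚ) else 0 := by
            refine Finset.sum_congr rfl fun k _ => by simp [Nat.lt_succ_iff]
        _ = ∑ k ∈ range (n + 1) ∩ range (m + 1),
              ((n.choose k : ℚ))^2 * ((n - k).choose (m - k) : ℚ) := Finset.sum_ite_mem _ _ _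
        _ = ∑ k ∈ range (m + 1), ((n.choose k : ℚ))^2 * ((n - k).choose (m - k) : ℚ) := by
            rw [Finset.inter_eq_right.2 (Finset.range_subset_range.2 (by omega))]
    rw [hsub]
    have h := congrArg (fun x : ℕ => (x : ℚ)) (key_nat n m hm)
    push_cast at h
    convert h using 2
  · rw [if_neg (by simp [Nat.lt_succ_iff]; omega)]
    refine Finset.sum_eq_zero fun k hk => ?_
    simp only [Nat.lt_succ_iff, Finset.mem_range] at hk
    split
    · have h0 : (n - k).choose (m - k) = 0 := Nat.choose_eq_zero_of_lt (by omega)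
      simp [h0]
    · rfl
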